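/- For a Lie algebra g over a field with basis x_1,…,x_d, the following identity holds in the top exterior power minus one contribution: ∑_{i<j} (-1)^{i+j} [x_i,x_j] ∧ x_1 ∧ … ∧ x̂_i ∧ … ∧ x̂_j ∧ … ∧ x_d = ∑_s (-1)^s tr(ad(x_s)) · x_1 ∧ … ∧ x̂_s ∧ … ∧ x_d in Λ^{d-1} g. -/

import Mathlib

open ExteriorAlgebra

section ExtLemmas
variable {L : Type*} [Field L] {g : Type*} [AddCommGroup g] [Module L g]

lemma ia_mul_ib (a c : g) : ι L a * ι L c = - (ι L c * ι L a) := by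
  have := ExteriorAlgebra.ι_add_mul_swap (R := L) a c
  linear_combination (norm := noncomm_ring) this

lemma mul_prod_of_mem (a : g) (l : List g) (h : a ∈ l) :
    ι L a * (l.map (ι L)).prod = 0 := by
  induction l with
  | nil => simp at h
  | cons c t ih =>
    rw [List.map_cons, List.prod_cons]
    rcases List.mem_cons.mp h with rfl | h
    · rw [← mul_assoc, ι_sq_zero, zero_mul]
    · rw [← mul_assoc, ia_mul_ib, neg_mul, mul_assoc, ih h, mul_zero, neg_zero]

lemma mul_prod_split (a : g) (l1 l2 : List g) :
    ι L a * ((l1 ++ l2).map (ι L)).prod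
      = ((-1 : L) ^ l1.length) • ((l1 ++ a :: l2).map (ι L)).prod := by
  induction l1 with
  | nil => simp
  | cons c t ih =>
    simp only [List.cons_append, List.map_cons, List.prod_cons, List.length_cons]
    rw [← mul_assoc, ia_mul_ib, neg_mul, mul_assoc, ih, mul_smul_comm, pow_succ, mul_smul,
      neg_one_smul, smul_neg]

end ExtLemmas

section ListLemmas
variable {α : Type*} [LinearOrder α]

lemma split_not_mem (p : α → Prop) [DecidablePred p] (i : α) :
    ∀ l : List α, l.Pairwise (· < ·) → (∀ k ∈ l, p k → k ≠ i) →
      l.filter (fun k => p k) =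
        l.filter (fun k => p k ∧ k < i) ++ l.filter (fun k => p k ∧ i < k) := by
  intro l
  induction l with
  | nil => simp
  | cons a t ih =>
    intro hp hne
    rw [List.pairwise_cons] at hp
    have hne' : ∀ k ∈ t, p k → k ≠ i := fun k hk => hne k (List.mem_cons_of_mem _ hk)
    by_cases hpa : p a
    · have hai : a ≠ i := hne a List.mem_cons_self hpa
      rcases lt_or_gt_of_ne hai with h | h
      · rw [List.filter_cons_of_pos (by simpa using hpa),
          List.filter_cons_of_pos (by simp [hpa, h]),
          List.filter_cons_of_neg (by simp [hpa, h, asymm h]),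
          List.cons_append, ih hp.2 hne']
      · have ht : t.filter (fun k => p k ∧ k < i) = [] := by
          rw [List.filter_eq_nil_iff]
          intro k hk
          simp only [decide_eq_true_eq, not_and]
          exact fun _ hki => absurd (lt_trans hki h) (lt_asymm (hp.1 k hk))
        rw [List.filter_cons_of_pos (by simpa using hpa),
          List.filter_cons_of_neg (by simp [hpa, asymm h]),
          List.filter_cons_of_pos (by simp [hpa, h]), ht,
          ih hp.2 hne', ht]
        simp
    · rw [List.filter_cons_of_neg (by simpa using hpa),
        List.filter_cons_of_neg (by simp [hpa]),
        List.filter_cons_of_neg (by simp [hpa]), ih hp.2 hne']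

lemma split_mem (p : α → Prop) [DecidablePred p] (i : α) (hpi : p i) :
    ∀ l : List α, l.Pairwise (· < ·) → i ∈ l →
      l.filter (fun k => p k) =
        l.filter (fun k => p k ∧ k < i) ++ i :: l.filter (fun k => p k ∧ i < k) := by
  intro l
  induction l with
  | nil => simp
  | cons a t ih =>
    intro hp hmem
    rw [List.pairwise_cons] at hp
    rcases List.mem_cons.mp hmem with rfl | hmem
    · have h1 : t.filter (fun k => p k ∧ k < i) = [] := by
        rw [List.filter_eq_nil_iff]
        intro k hk
        simp only [decide_eq_true_eq, not_and]
        exact fun _ => asymm (hp.1 k hk)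
      have h2 : t.filter (fun k => p k) = t.filter (fun k => p k ∧ i < k) := by
        apply List.filter_congr
        intro k hk
        simp [hp.1 k hk]
      rw [List.filter_cons_of_pos (by simpa using hpi),
        List.filter_cons_of_neg (by simp),
        List.filter_cons_of_neg (by simp), h1, h2]
      simp
    · have hai : a < i := hp.1 i hmem
      by_cases hpa : p a
      · rw [List.filter_cons_of_pos (by simpa using hpa),
          List.filter_cons_of_pos (by simp [hpa, hai]),
          List.filter_cons_of_neg (by simp [hpa, hai, asymm hai]),
          List.cons_append, ih hp.2 hmem]
      · rw [List.filter_cons_of_neg (by simpa using hpa),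
          List.filter_cons_of_neg (by simp [hpa]),
          List.filter_cons_of_neg (by simp [hpa]), ih hp.2 hmem]

lemma length_filter_univ {d : ℕ} (p : Fin d → Prop) [DecidablePred p] :
    ((List.finRange d).filter (fun k => p k)).length = (Finset.univ.filter p).card := by
  rw [Fin.univ_def]
  simp [Finset.filter, Finset.card]

end ListLemmas

/-- The final combinatorial resummation. -/
lemma resum {M : Type*} [AddCommMonoid M] {d : ℕ} (F : Fin d → Fin d → M)
    (hF : ∀ s, F s s = 0) :
    (∑ i : Fin d, ∑ j : Fin d, if i < j then F j i + F i j else 0)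
      = ∑ s : Fin d, ∑ k : Fin d, F s k := by
  have step : (∑ i : Fin d, ∑ j : Fin d, if i < j then F j i + F i j else 0)
      = (∑ i : Fin d, ∑ j : Fin d, if i < j then F j i else 0)
        + (∑ i : Fin d, ∑ j : Fin d, if i < j then F i j else 0) := by
    rw [← Finset.sum_add_distrib]
    refine Finset.sum_congr rfl fun i _ => ?_
    rw [← Finset.sum_add_distrib]
    refine Finset.sum_congr rfl fun j _ => ?_
    split <;> simp
  rw [step, Finset.sum_comm (f := fun i j => if i < j then F j i else 0),
    ← Finset.sum_add_distrib]
  refine Finset.sum_congr rfl fun s _ => ?_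
  rw [← Finset.sum_add_distrib]
  refine Finset.sum_congr rfl fun k _ => ?_
  rcases lt_trichotomy k s with h | rfl | h
  · rw [if_pos h, if_neg (asymm h), add_zero]
  · rw [if_neg (lt_irrefl k), hF, add_zero]
  · rw [if_neg (asymm h), if_pos h, zero_add]

theorem stmt_2 (L : Type*) [Field L] (g : Type*) [LieRing g] [LieAlgebra L g]
    (d : ℕ) (b : Module.Basis (Fin d) L g) (x : Fin d → g) (hx : x = ⇑b) :
    (∑ i : Fin d, ∑ j : Fin d,
      if i < j then
        ((-1 : L) ^ ((i : ℕ) + (j : ℕ))) •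
          (ExteriorAlgebra.ι L ⁅x i, x j⁆ *
            (((List.finRange d).filter (fun k => k ≠ i ∧ k ≠ j)).map
              (fun k => ExteriorAlgebra.ι L (x k))).prod)
      else 0) =
    ∑ s : Fin d,
      ((-1 : L) ^ ((s : ℕ) + 1) * LinearMap.trace L g (LieAlgebra.ad L g (x s))) •
        (((List.finRange d).filter (fun k => k ≠ s)).map
          (fun k => ExteriorAlgebra.ι L (x k))).prod := by
  subst hx
  set fr := List.finRange d with hfr
  have hsort : fr.Pairwise (· < ·) := List.pairwise_lt_finRange d
  set c : Fin d → Fin d → Fin d → L := fun i j k => b.repr ⁅b i, b j⁆ k with hc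
  set Q : Fin d → ExteriorAlgebra L g :=
    fun s => ((fr.filter (fun k => k ≠ s)).map (fun k => ι L (b k))).prod with hQ
  have hpow : ∀ a t : ℕ, (-1 : L) ^ (a + 2 * t) = (-1) ^ a := fun a t => by
    rw [pow_add, pow_mul, neg_one_sq, one_pow, mul_one]
  -- trace formula
  have htr : ∀ s : Fin d, LinearMap.trace L g (LieAlgebra.ad L g (b s)) = ∑ k, c s k k := by
    intro s
    rw [LinearMap.trace_eq_matrix_trace L b, Matrix.trace]
    refine Finset.sum_congr rfl fun k _ => ?_
    simp [Matrix.diag_apply, LinearMap.toMatrix_apply, LieAlgebra.ad_apply, hc]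
  -- the key computation for each pair i < j
  have key : ∀ i j : Fin d, i < j →
      ((-1 : L) ^ ((i : ℕ) + (j : ℕ))) •
        (ι L ⁅b i, b j⁆ *
          ((fr.filter (fun k => k ≠ i ∧ k ≠ j)).map (fun k => ι L (b k))).prod)
      = (((-1 : L) ^ ((j : ℕ) + 1) * c j i i) • Q j)
        + (((-1 : L) ^ ((i : ℕ) + 1) * c i j j) • Q i) := by
    intro i j hij
    have hij' : (i : ℕ) < (j : ℕ) := hij
    have hne : i ≠ j := ne_of_lt hij
    -- list decompositions
    have e1 : fr.filter (fun k => (k ≠ j) ∧ k < i) = fr.filter (fun k => k < i) := by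
      apply List.filter_congr; intro k _
      simp only [decide_eq_decide]
      exact ⟨fun h => h.2, fun h => ⟨ne_of_lt (lt_trans h hij), h⟩⟩
    have e2 : fr.filter (fun k => (k ≠ i ∧ k ≠ j) ∧ k < i) = fr.filter (fun k => k < i) := by
      apply List.filter_congr; intro k _
      simp only [decide_eq_decide]
      exact ⟨fun h => h.2, fun h => ⟨⟨ne_of_lt h, ne_of_lt (lt_trans h hij)⟩, h⟩⟩
    have e3 : fr.filter (fun k => (k ≠ i ∧ k ≠ j) ∧ i < k)
        = fr.filter (fun k => (k ≠ j) ∧ i < k) := by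
      apply List.filter_congr; intro k _
      simp only [decide_eq_decide]
      exact ⟨fun h => ⟨h.1.2, h.2⟩, fun h => ⟨⟨(ne_of_lt h.2).symm, h.1⟩, h.2⟩⟩
    have f1 : fr.filter (fun k => (k ≠ i ∧ k ≠ j) ∧ k < j)
        = fr.filter (fun k => (k ≠ i) ∧ k < j) := by
      apply List.filter_congr; intro k _
      simp only [decide_eq_decide]
      exact ⟨fun h => ⟨h.1.1, h.2⟩, fun h => ⟨⟨h.1, ne_of_lt h.2⟩, h.2⟩⟩
    have f2 : fr.filter (fun k => (k ≠ i) ∧ j < k) = fr.filter (fun k => j < k) := by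
      apply List.filter_congr; intro k _
      simp only [decide_eq_decide]
      exact ⟨fun h => h.2, fun h => ⟨(ne_of_lt (lt_trans hij h)).symm, h⟩⟩
    have f3 : fr.filter (fun k => (k ≠ i ∧ k ≠ j) ∧ j < k) = fr.filter (fun k => j < k) := by
      apply List.filter_congr; intro k _
      simp only [decide_eq_decide]
      exact ⟨fun h => h.2,
        fun h => ⟨⟨(ne_of_lt (lt_trans hij h)).symm, (ne_of_lt h).symm⟩, h⟩⟩
    have hsplitj : fr.filter (fun k => k ≠ j)
        = fr.filter (fun k => k < i) ++ i :: fr.filter (fun k => (k ≠ j) ∧ i < k) := by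
      rw [split_mem (fun k => k ≠ j) i hne fr hsort (by simp [hfr]), e1]
    have hspliti : fr.filter (fun k => k ≠ i)
        = fr.filter (fun k => (k ≠ i) ∧ k < j) ++ j :: fr.filter (fun k => j < k) := by
      rw [split_mem (fun k => k ≠ i) j (Ne.symm hne) fr hsort (by simp [hfr]), f2]
    have hsplit2i : fr.filter (fun k => k ≠ i ∧ k ≠ j)
        = fr.filter (fun k => k < i) ++ fr.filter (fun k => (k ≠ j) ∧ i < k) := by
      rw [split_not_mem (fun k => k ≠ i ∧ k ≠ j) i fr hsort (fun k _ h => h.1), e2, e3]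
    have hsplit2j : fr.filter (fun k => k ≠ i ∧ k ≠ j)
        = fr.filter (fun k => (k ≠ i) ∧ k < j) ++ fr.filter (fun k => j < k) := by
      rw [split_not_mem (fun k => k ≠ i ∧ k ≠ j) j fr hsort (fun k _ h => h.2), f1, f3]
    -- lengths
    have hlenA : (fr.filter (fun k => k < i)).length = (i : ℕ) := by
      rw [hfr, length_filter_univ]
      have : Finset.univ.filter (fun k : Fin d => k < i) = Finset.Iio i := by
        ext k; simp
      rw [this, Fin.card_Iio]
    have hlenC : (fr.filter (fun k => (k ≠ i) ∧ k < j)).length = (j : ℕ) - 1 := by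
      rw [hfr, length_filter_univ]
      have : Finset.univ.filter (fun k : Fin d => (k ≠ i) ∧ k < j)
          = (Finset.Iio j).erase i := by
        ext k; simp [and_comm]
      rw [this, Finset.card_erase_of_mem (by simpa using hij), Fin.card_Iio]
    -- expand the bracket
    have hbr : ι L ⁅b i, b j⁆ = ∑ k, c i j k • ι L (b k) := by
      conv_lhs => rw [← b.sum_repr ⁅b i, b j⁆]
      rw [map_sum]
      exact Finset.sum_congr rfl fun k _ => by rw [map_smul]
    have hmap : ∀ (l : List (Fin d)),
        (l.map (fun k => ι L (b k))).prod = ((l.map b).map (ι L)).prod := by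
      intro l; rw [List.map_map]; rfl
    rw [hbr, Finset.sum_mul]
    have hterm : ∀ k : Fin d,
        (c i j k • ι L (b k)) *
          ((fr.filter (fun m => m ≠ i ∧ m ≠ j)).map (fun m => ι L (b m))).prod
        = if k = i then ((-1 : L) ^ (i : ℕ) * c i j i) • Q j
          else if k = j then ((-1 : L) ^ ((j : ℕ) - 1) * c i j j) • Q i
          else 0 := by
      intro k
      rw [smul_mul_assoc]
      by_cases hki : k = i
      · subst hki
        rw [if_pos rfl, hmap, hsplit2i, List.map_append, mul_prod_split, List.length_map,
          hlenA]
        rw [← List.map_cons, ← List.map_append, ← hsplitj, ← hmap]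
        rw [smul_smul, mul_comm]
      · rw [if_neg hki]
        by_cases hkj : k = j
        · subst hkj
          rw [if_pos rfl, hmap, hsplit2j, List.map_append, mul_prod_split, List.length_map,
            hlenC]
          rw [← List.map_cons, ← List.map_append, ← hspliti, ← hmap]
          rw [smul_smul, mul_comm]
        · rw [if_neg hkj, hmap, mul_prod_of_mem, smul_zero]
          exact List.mem_map_of_mem (f := ⇑b) (by simp [hfr, hki, hkj])
    calc ((-1 : L) ^ ((i : ℕ) + (j : ℕ))) •
          ∑ k, (c i j k • ι L (b k)) *
            ((fr.filter (fun m => m ≠ i ∧ m ≠ j)).map (fun m => ι L (b m))).prod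
        = ((-1 : L) ^ ((i : ℕ) + (j : ℕ))) •
            (((-1 : L) ^ (i : ℕ) * c i j i) • Q j
              + ((-1 : L) ^ ((j : ℕ) - 1) * c i j j) • Q i) := by
          congr 1
          rw [Finset.sum_congr rfl fun k _ => hterm k,
            Finset.sum_eq_add_of_mem i j (Finset.mem_univ i) (Finset.mem_univ j) hne
              (fun k _ hk => by rw [if_neg hk.1, if_neg hk.2]),
            if_pos rfl, if_neg (Ne.symm hne), if_pos rfl]
      _ = (((-1 : L) ^ ((j : ℕ) + 1) * c j i i) • Q j)
            + (((-1 : L) ^ ((i : ℕ) + 1) * c i j j) • Q i) := by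
          rw [smul_add, smul_smul, smul_smul]
          have hskew : c j i i = - c i j i := by
            have h : ⁅b j, b i⁆ = -⁅b i, b j⁆ := (lie_skew (b j) (b i)).symm
            simp only [hc, h, map_neg, Finsupp.neg_apply]
          have s1 : (-1 : L) ^ ((i : ℕ) + (j : ℕ)) * ((-1 : L) ^ (i : ℕ) * c i j i)
              = (-1 : L) ^ ((j : ℕ) + 1) * c j i i := by
            rw [hskew, ← mul_assoc, ← pow_add]
            rw [show (i : ℕ) + (j : ℕ) + (i : ℕ) = (j : ℕ) + 2 * (i : ℕ) by omega, hpow,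
              pow_succ]
            ring
          have s2 : (-1 : L) ^ ((i : ℕ) + (j : ℕ)) * ((-1 : L) ^ ((j : ℕ) - 1) * c i j j)
              = (-1 : L) ^ ((i : ℕ) + 1) * c i j j := by
            rw [← mul_assoc, ← pow_add,
              show (i : ℕ) + (j : ℕ) + ((j : ℕ) - 1) = ((i : ℕ) + 1) + 2 * ((j : ℕ) - 1)
                by omega]
            rw [hpow]
          rw [s1, s2]
  set F : Fin d → Fin d → ExteriorAlgebra L g :=
    fun s k => ((-1 : L) ^ ((s : ℕ) + 1) * c s k k) • Q s with hFdef
  have step1 : (∑ i : Fin d, ∑ j : Fin d,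
      if i < j then
        ((-1 : L) ^ ((i : ℕ) + (j : ℕ))) •
          (ι L ⁅b i, b j⁆ *
            ((fr.filter (fun k => k ≠ i ∧ k ≠ j)).map (fun k => ι L (b k))).prod)
      else 0)
      = ∑ i : Fin d, ∑ j : Fin d, if i < j then F j i + F i j else 0 := by
    refine Finset.sum_congr rfl fun i _ => Finset.sum_congr rfl fun j _ => ?_
    by_cases h : i < j
    · rw [if_pos h, if_pos h, key i j h]
    · rw [if_neg h, if_neg h]
  rw [step1, resum F fun s => by
    show ((-1 : L) ^ ((s : ℕ) + 1) * c s s s) • Q s = 0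
    have hcs : c s s s = 0 := by
      simp only [hc, lie_self, map_zero, Finsupp.coe_zero, Pi.zero_apply]
    rw [hcs, mul_zero, zero_smul]]
  refine Finset.sum_congr rfl fun s _ => ?_
  show _ = ((-1 : L) ^ ((s : ℕ) + 1) * LinearMap.trace L g (LieAlgebra.ad L g (b s))) • Q s
  rw [htr s, Finset.mul_sum, Finset.sum_smul]
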